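/- For all integers m ≥ 2 and n ≥ 1, the group D_{2^m(2n+1)}, i.e. the presented group ⟨x, y ∣ x^{2^m} = 1, y^{2n+1} = 1, xyx⁻¹ = y⁻¹⟩ (the quotient of the free group on two generators x, y by the normal closure of the relators x^{2^m}, y^{2n+1}, xyx⁻¹y), has Grossman's Property A. -/

import Mathlib

/-- A group `G` has Grossman's Property A if every class-preserving automorphism
(i.e. one sending each element to a conjugate of itself) is inner. -/
def HasPropertyA (G : Type*) [Group G] : Prop :=
  ∀ φ : G ≃* G, (∀ g : G, IsConj g (φ g)) → ∃ h : G, ∀ g : G, φ g = h * g * h⁻¹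

/-- The relators of the group
`D_{2^m(2n+1)} = ⟨x, y ∣ x^{2^m} = 1, y^{2n+1} = 1, xyx⁻¹ = y⁻¹⟩`,
where `x`, `y` are the generators `0`, `1`. -/
def DRels (m n : ℕ) : Set (FreeGroup (Fin 2)) :=
  let x : FreeGroup (Fin 2) := FreeGroup.of 0
  let y : FreeGroup (Fin 2) := FreeGroup.of 1
  {x ^ (2 ^ m), y ^ (2 * n + 1), x * y * x⁻¹ * y}

namespace DAux

variable (m n : ℕ)

/-- The image of the generator `x`. -/
def X : PresentedGroup (DRels m n) := PresentedGroup.of 0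

/-- The image of the generator `y`. -/
def Y : PresentedGroup (DRels m n) := PresentedGroup.of 1

lemma mem_one {r : FreeGroup (Fin 2)} (hr : r ∈ DRels m n) :
    PresentedGroup.mk (DRels m n) r = 1 :=
  (QuotientGroup.eq_one_iff r).mpr (Subgroup.subset_normalClosure hr)

lemma rel_y : (Y m n) ^ (2 * n + 1) = 1 := by
  have h : FreeGroup.of (1 : Fin 2) ^ (2 * n + 1) ∈ DRels m n := by
    simp [DRels]
  have := mem_one m n h
  rwa [map_pow] at this

lemma rel_y' : (Y m n) ^ ((2 * n + 1 : ℕ) : ℤ) = 1 := by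
  rw [zpow_natCast]; exact rel_y m n

lemma rel_xy : (X m n) * (Y m n) * (X m n)⁻¹ = (Y m n)⁻¹ := by
  have h : FreeGroup.of (0 : Fin 2) * FreeGroup.of 1 * (FreeGroup.of 0)⁻¹ * FreeGroup.of 1
      ∈ DRels m n := by
    simp [DRels]
  have := mem_one m n h
  rw [map_mul, map_mul, map_mul, map_inv] at this
  exact eq_inv_of_mul_eq_one_left this

/-- `x * y^b * x⁻¹ = y^(-b)` -/
lemma conj_x_ypow (b : ℤ) : (X m n) * (Y m n) ^ b * (X m n)⁻¹ = (Y m n) ^ (-b) := by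
  rw [← conj_zpow, rel_xy, ← zpow_neg_one, ← zpow_mul]
  ring_nf

/-- `y^b * x = x * y^(-b)` -/
lemma ypow_x (b : ℤ) : (Y m n) ^ b * (X m n) = (X m n) * (Y m n) ^ (-b) := by
  have := conj_x_ypow m n (-b)
  rw [neg_neg] at this
  rw [← this]
  group

/-- `y^b * x⁻¹ = x⁻¹ * y^(-b)` -/
lemma ypow_xinv (b : ℤ) : (Y m n) ^ b * (X m n)⁻¹ = (X m n)⁻¹ * (Y m n) ^ (-b) := by
  have h := ypow_x m n (-b)
  rw [neg_neg] at h
  calc (Y m n) ^ b * (X m n)⁻¹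
      = (X m n)⁻¹ * ((X m n) * (Y m n) ^ b) * (X m n)⁻¹ := by group
    _ = (X m n)⁻¹ * ((Y m n) ^ (-b) * (X m n)) * (X m n)⁻¹ := by rw [← h]
    _ = (X m n)⁻¹ * (Y m n) ^ (-b) := by group

/-- moving `y` past `x^c` flips or keeps it. -/
lemma y_xpow (c : ℤ) : ∃ e : ℤ, (e = 1 ∨ e = -1) ∧
    (Y m n) * (X m n) ^ c = (X m n) ^ c * (Y m n) ^ e := by
  induction c using Int.induction_on with
  | zero => exact ⟨1, Or.inl rfl, by group⟩
  | succ k ih =>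
    obtain ⟨e, he, h⟩ := ih
    refine ⟨-e, by omega, ?_⟩
    calc (Y m n) * (X m n) ^ ((k : ℤ) + 1)
        = ((Y m n) * (X m n) ^ (k : ℤ)) * (X m n) := by group
      _ = (X m n) ^ (k : ℤ) * ((Y m n) ^ e * (X m n)) := by rw [h]; group
      _ = (X m n) ^ (k : ℤ) * ((X m n) * (Y m n) ^ (-e)) := by rw [ypow_x]
      _ = (X m n) ^ ((k : ℤ) + 1) * (Y m n) ^ (-e) := by group
  | pred k ih =>
    obtain ⟨e, he, h⟩ := ih
    refine ⟨-e, by omega, ?_⟩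
    calc (Y m n) * (X m n) ^ (-(k : ℤ) - 1)
        = ((Y m n) * (X m n) ^ (-(k : ℤ))) * (X m n)⁻¹ := by group
      _ = (X m n) ^ (-(k : ℤ)) * ((Y m n) ^ e * (X m n)⁻¹) := by rw [h]; group
      _ = (X m n) ^ (-(k : ℤ)) * ((X m n)⁻¹ * (Y m n) ^ (-e)) := by rw [ypow_xinv]
      _ = (X m n) ^ (-(k : ℤ) - 1) * (Y m n) ^ (-e) := by group

/-- moving `y^b` past `x^c`. -/
lemma ypow_xpow (c b : ℤ) : ∃ d : ℤ,
    (Y m n) ^ b * (X m n) ^ c = (X m n) ^ c * (Y m n) ^ d := by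
  obtain ⟨e, _, h⟩ := y_xpow m n c
  refine ⟨e * b, ?_⟩
  have hc : (X m n) ^ c * (Y m n) ^ e * ((X m n) ^ c)⁻¹ = (Y m n) := by
    rw [← h]; group
  calc (Y m n) ^ b * (X m n) ^ c
      = (X m n) ^ c * (((X m n) ^ c)⁻¹ * (Y m n) ^ b * (X m n) ^ c) := by group
    _ = (X m n) ^ c * (((X m n) ^ c)⁻¹ * ((X m n) ^ c * (Y m n) ^ e * ((X m n) ^ c)⁻¹) ^ b
          * (X m n) ^ c) := by rw [hc]
    _ = (X m n) ^ c * ((Y m n) ^ e) ^ b := by rw [conj_zpow]; group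
    _ = (X m n) ^ c * (Y m n) ^ (e * b) := by rw [← zpow_mul]

/-- normal form : every element is `x^a * y^b`. -/
lemma normal_form (g : PresentedGroup (DRels m n)) :
    ∃ a b : ℤ, g = (X m n) ^ a * (Y m n) ^ b := by
  let H : Subgroup (PresentedGroup (DRels m n)) :=
    { carrier := {g | ∃ a b : ℤ, g = (X m n) ^ a * (Y m n) ^ b}
      one_mem' := ⟨0, 0, by group⟩
      mul_mem' := by
        rintro u v ⟨a, b, rfl⟩ ⟨c, d, rfl⟩
        obtain ⟨e, he⟩ := ypow_xpow m n c b
        exact ⟨a + c, e + d, by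
          rw [zpow_add, zpow_add, mul_assoc, mul_assoc, ← mul_assoc ((Y m n) ^ b), he]; group⟩
      inv_mem' := by
        rintro u ⟨a, b, rfl⟩
        obtain ⟨e, he⟩ := ypow_xpow m n (-a) (-b)
        exact ⟨-a, e, by rw [← he]; group⟩ }
  have : g ∈ H := by
    apply PresentedGroup.generated_by
    intro j
    fin_cases j
    · exact ⟨1, 0, by rw [zpow_one, zpow_zero, mul_one]; rfl⟩
    · exact ⟨0, 1, by rw [zpow_one, zpow_zero, one_mul]; rfl⟩
  exact this

/-- conjugates of `y` are `y` or `y⁻¹`. -/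
lemma conj_y_eq (g : PresentedGroup (DRels m n)) :
    g * (Y m n) * g⁻¹ = (Y m n) ∨ g * (Y m n) * g⁻¹ = (Y m n)⁻¹ := by
  obtain ⟨a, b, rfl⟩ := normal_form m n g
  obtain ⟨e, he, h⟩ := y_xpow m n (-a)
  have key : (X m n) ^ a * (Y m n) ^ b * (Y m n) * ((X m n) ^ a * (Y m n) ^ b)⁻¹
      = (Y m n) ^ e := by
    calc (X m n) ^ a * (Y m n) ^ b * (Y m n) * ((X m n) ^ a * (Y m n) ^ b)⁻¹
        = (X m n) ^ a * ((Y m n) * (X m n) ^ (-a)) := by group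
      _ = (X m n) ^ a * ((X m n) ^ (-a) * (Y m n) ^ e) := by rw [h]
      _ = (Y m n) ^ e := by group
  rcases he with rfl | rfl
  · left; rw [key, zpow_one]
  · right; rw [key]; group

/-- conjugates of `x` have the form `x * y^k`. -/
lemma conj_x_eq (g : PresentedGroup (DRels m n)) :
    ∃ k : ℤ, g * (X m n) * g⁻¹ = (X m n) * (Y m n) ^ k := by
  obtain ⟨a, b, rfl⟩ := normal_form m n g
  obtain ⟨d, hd⟩ := ypow_xpow m n (-a) (-2 * b)
  refine ⟨d, ?_⟩
  have h1 : (Y m n) ^ b * (X m n) = (X m n) * (Y m n) ^ (-b) := ypow_x m n b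
  calc (X m n) ^ a * (Y m n) ^ b * (X m n) * ((X m n) ^ a * (Y m n) ^ b)⁻¹
      = (X m n) ^ a * ((Y m n) ^ b * (X m n)) * (Y m n) ^ (-b) * (X m n) ^ (-a) := by group
    _ = (X m n) ^ a * ((X m n) * (Y m n) ^ (-b)) * (Y m n) ^ (-b) * (X m n) ^ (-a) := by rw [h1]
    _ = (X m n) ^ (a + 1) * ((Y m n) ^ (-2 * b) * (X m n) ^ (-a)) := by
        rw [show (-2 : ℤ) * b = -b + -b by ring, zpow_add, zpow_add]; group
    _ = (X m n) ^ (a + 1) * ((X m n) ^ (-a) * (Y m n) ^ d) := by rw [hd]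
    _ = (X m n) * (Y m n) ^ d := by group

/-- `y^(2*(k*(n+1))) = y^k`, since `y^(2n+1) = 1`. -/
lemma ypow_reduce (k : ℤ) : (Y m n) ^ ((2 : ℤ) * (k * ((n : ℤ) + 1))) = (Y m n) ^ k := by
  have h : (2 : ℤ) * (k * ((n : ℤ) + 1)) = ((2 * n + 1 : ℕ) : ℤ) * k + k := by
    push_cast; ring
  rw [h, zpow_add, zpow_mul, rel_y' m n, one_zpow, one_mul]


/-- If an automorphism agrees with conjugation by `h` on the generators, it is that inner
automorphism. -/
lemma inner_of (φ : PresentedGroup (DRels m n) ≃* PresentedGroup (DRels m n))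
    (h : PresentedGroup (DRels m n))
    (hx : φ (X m n) = h * (X m n) * h⁻¹) (hy : φ (Y m n) = h * (Y m n) * h⁻¹) :
    ∀ g, φ g = h * g * h⁻¹ := by
  intro g
  obtain ⟨a, b, rfl⟩ := normal_form m n g
  rw [map_mul, map_zpow, map_zpow, hx, hy, conj_zpow, conj_zpow]
  group

end DAux

theorem D_propertyA : ∀ m n : ℕ, 2 ≤ m → 1 ≤ n →
    HasPropertyA (PresentedGroup (DRels m n)) := by
  intro m n _ _ φ hφ
  obtain ⟨gx, hgx⟩ := isConj_iff.mp (hφ (DAux.X m n))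
  obtain ⟨k, hk⟩ := DAux.conj_x_eq m n gx
  rw [hgx] at hk
  obtain ⟨gy, hgy⟩ := isConj_iff.mp (hφ (DAux.Y m n))
  have hyc := DAux.conj_y_eq m n gy
  rw [hgy] at hyc
  set x := DAux.X m n with hxdef
  set y := DAux.Y m n with hydef
  set t : ℤ := -(k * ((n : ℤ) + 1)) with ht
  have hconjx : (y ^ t) * x * (y ^ t)⁻¹ = x * y ^ k := by
    calc (y ^ t) * x * (y ^ t)⁻¹
        = (y ^ t * x) * y ^ (-t) := by group
      _ = (x * y ^ (-t)) * y ^ (-t) := by rw [DAux.ypow_x]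
      _ = x * y ^ ((2 : ℤ) * (k * ((n : ℤ) + 1))) := by
          rw [show (2 : ℤ) * (k * ((n : ℤ) + 1)) = -t + -t by rw [ht]; ring, zpow_add]; group
      _ = x * y ^ k := by rw [DAux.ypow_reduce]
  rcases hyc with hyc | hyc
  · refine ⟨y ^ t, DAux.inner_of m n φ (y ^ t) (hk.trans hconjx.symm) ?_⟩
    rw [hyc, ← hydef]; group
  · refine ⟨y ^ t * x, DAux.inner_of m n φ (y ^ t * x) ?_ ?_⟩
    · rw [hk, ← hconjx, ← hxdef]; group
    · rw [hyc]
      calc (y : PresentedGroup (DRels m n))⁻¹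
          = y ^ t * (y⁻¹) * (y ^ t)⁻¹ := by group
        _ = y ^ t * (x * y * x⁻¹) * (y ^ t)⁻¹ := by rw [DAux.rel_xy]
        _ = (y ^ t * x) * y * (y ^ t * x)⁻¹ := by group
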